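/- Let k be a field, A a Hopf algebra over k, and M a left Hopf module over A. Then M is free as a left A-module. -/

import Mathlib

open TensorProduct

set_option linter.unusedSectionVars false
set_option maxHeartbeats 1000000

namespace HopfAux
open Coalgebra HopfAlgebra


section Conv
variable (k : Type*) {A B : Type*} [CommSemiring k]
  [AddCommMonoid A] [Module k A] [Coalgebra k A]
  [Semiring B] [Algebra k B]

noncomputable def conv (f g : A →ₗ[k] B) : A →ₗ[k] B :=
  LinearMap.mul' k B ∘ₗ TensorProduct.map f g ∘ₗ Coalgebra.comul

noncomputable def convOne : A →ₗ[k] B :=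
  Algebra.linearMap k B ∘ₗ Coalgebra.counit

lemma conv_apply_repr (f g : A →ₗ[k] B) {a : A} (r : Coalgebra.Repr k a (A × A)) :
    conv k f g a = ∑ i ∈ r.index, f (r.left i) * g (r.right i) := by
  simp only [conv, LinearMap.comp_apply, ← r.eq, map_sum, TensorProduct.map_tmul,
    LinearMap.mul'_apply]

lemma sum_counit_smul {a : A} (r : Coalgebra.Repr k a (A × A)) :
    ∑ i ∈ r.index, Coalgebra.counit (R := k) (r.left i) • r.right i = a := by
  have := congrArg (TensorProduct.lid k A) (Coalgebra.sum_counit_tmul_eq r)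
  simpa [map_sum, -Coalgebra.sum_counit_tmul_eq] using this

lemma sum_smul_counit {a : A} (r : Coalgebra.Repr k a (A × A)) :
    ∑ i ∈ r.index, Coalgebra.counit (R := k) (r.right i) • r.left i = a := by
  have := congrArg (TensorProduct.rid k A) (Coalgebra.sum_tmul_counit_eq r)
  simpa [map_sum, -Coalgebra.sum_tmul_counit_eq] using this

lemma one_conv (f : A →ₗ[k] B) : conv k (convOne k) f = f := by
  ext a
  rw [conv_apply_repr k _ _ (ℛ k a)]
  simp only [convOne, LinearMap.comp_apply, Algebra.linearMap_apply,
    ← Algebra.smul_def, ← map_smul]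
  rw [← map_sum, sum_counit_smul]

lemma conv_one (f : A →ₗ[k] B) : conv k f (convOne k) = f := by
  ext a
  rw [conv_apply_repr k _ _ (ℛ k a)]
  simp only [convOne, LinearMap.comp_apply, Algebra.linearMap_apply]
  rw [Finset.sum_congr rfl (fun i _ => by
    rw [← Algebra.commutes, ← Algebra.smul_def, ← map_smul] :
    ∀ i ∈ (ℛ k a).index, f ((ℛ k a).left i) *
      (algebraMap k B) (Coalgebra.counit ((ℛ k a).right i)) =
      f (Coalgebra.counit (R := k) ((ℛ k a).right i) • (ℛ k a).left i))]
  rw [← map_sum, sum_smul_counit]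

lemma conv_assoc (f g h : A →ₗ[k] B) :
    conv k (conv k f g) h = conv k f (conv k g h) := by
  ext a
  have key := Coalgebra.sum_tmul_tmul_eq (ℛ k a)
    (fun i => ℛ k ((ℛ k a).left i)) (fun i => ℛ k ((ℛ k a).right i))
  apply_fun (LinearMap.mul' k B ∘ₗ
    TensorProduct.map f (LinearMap.mul' k B ∘ₗ TensorProduct.map g h)) at key
  simp only [map_sum, LinearMap.comp_apply, TensorProduct.map_tmul,
    LinearMap.mul'_apply] at key
  calc conv k (conv k f g) h a
      = ∑ i ∈ (ℛ k a).index, ∑ j ∈ (ℛ k ((ℛ k a).left i)).index,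
          f ((ℛ k ((ℛ k a).left i)).left j) *
            ((g ((ℛ k ((ℛ k a).left i)).right j)) * h ((ℛ k a).right i)) := by
        rw [conv_apply_repr k _ _ (ℛ k a)]
        refine Finset.sum_congr rfl fun i _ => ?_
        rw [conv_apply_repr k _ _ (ℛ k ((ℛ k a).left i)), Finset.sum_mul]
        exact Finset.sum_congr rfl fun j _ => mul_assoc _ _ _
    _ = ∑ i ∈ (ℛ k a).index, ∑ j ∈ (ℛ k ((ℛ k a).right i)).index,
          f ((ℛ k a).left i) * (g ((ℛ k ((ℛ k a).right i)).left j) *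
            h ((ℛ k ((ℛ k a).right i)).right j)) := key
    _ = conv k f (conv k g h) a := by
        rw [conv_apply_repr k _ _ (ℛ k a)]
        refine Finset.sum_congr rfl fun i _ => ?_
        rw [conv_apply_repr k _ _ (ℛ k ((ℛ k a).right i)), Finset.mul_sum]

lemma conv_inv_unique {f g h : A →ₗ[k] B}
    (hfg : conv k f g = convOne k) (hhf : conv k h f = convOne k) : h = g := by
  have : conv k h (conv k f g) = conv k h (convOne k) := by rw [hfg]
  rw [← conv_assoc, hhf, one_conv, conv_one] at this
  exact this.symm

end Conv

section Hopf
variable (k A : Type*) [CommSemiring k] [Semiring A] [HopfAlgebra k A]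

noncomputable def theta : A ⊗[k] ((A ⊗[k] A) ⊗[k] A) →ₗ[k] A ⊗[k] A :=
  (TensorProduct.map (LinearMap.mul' k A ∘ₗ (antipode (R := k)).rTensor A)
      (LinearMap.mul' k A ∘ₗ (antipode (R := k)).rTensor A)) ∘ₗ
    (TensorProduct.leftComm k A (A ⊗[k] A) A).toLinearMap

@[simp] lemma theta_tmul (x u v w : A) :
    theta k A (x ⊗ₜ[k] ((u ⊗ₜ[k] v) ⊗ₜ[k] w)) =
      (antipode (R := k) u * v) ⊗ₜ[k] (antipode (R := k) x * w) := by
  simp [theta]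

/-- The fourfold coproduct identity. -/
lemma fourfold {a : A} (r : Coalgebra.Repr k a (A × A))
    (rl : ∀ i, Coalgebra.Repr k (r.left i) (A × A))
    (rr : ∀ i, Coalgebra.Repr k (r.right i) (A × A))
    (rrl : ∀ i l, Coalgebra.Repr k ((rr i).left l) (A × A))
    (rrr : ∀ i l, Coalgebra.Repr k ((rr i).right l) (A × A)) :
    ∑ i ∈ r.index, ∑ j ∈ (rl i).index, ∑ l ∈ (rr i).index,
        (rl i).left j ⊗ₜ[k] (((rl i).right j ⊗ₜ[k] (rr i).left l) ⊗ₜ[k] (rr i).right l)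
      = ∑ i ∈ r.index, ∑ l ∈ (rr i).index, ∑ m ∈ (rrl i l).index,
        r.left i ⊗ₜ[k] (((rrl i l).left m ⊗ₜ[k] (rrl i l).right m) ⊗ₜ[k] (rr i).right l) := by
  have E1 := Coalgebra.sum_tmul_tmul_eq r rl rr
  have hW := congrArg (LinearMap.lTensor A
    ((TensorProduct.assoc k A A A).symm.toLinearMap ∘ₗ
      (Coalgebra.comul (R := k)).lTensor A)) E1
  simp only [map_sum, LinearMap.lTensor_tmul, LinearMap.comp_apply] at hW
  calc
    ∑ i ∈ r.index, ∑ j ∈ (rl i).index, ∑ l ∈ (rr i).index,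
        (rl i).left j ⊗ₜ[k] (((rl i).right j ⊗ₜ[k] (rr i).left l) ⊗ₜ[k] (rr i).right l)
      = ∑ i ∈ r.index, ∑ j ∈ (rl i).index,
          (rl i).left j ⊗ₜ[k] ((TensorProduct.assoc k A A A).symm
            ((rl i).right j ⊗ₜ[k] Coalgebra.comul (r.right i))) := by
        refine Finset.sum_congr rfl fun i _ => Finset.sum_congr rfl fun j _ => ?_
        rw [← (rr i).eq, tmul_sum, map_sum, tmul_sum]
        exact Finset.sum_congr rfl fun l _ => by rw [TensorProduct.assoc_symm_tmul]
    _ = ∑ i ∈ r.index, ∑ l ∈ (rr i).index,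
          r.left i ⊗ₜ[k] ((TensorProduct.assoc k A A A).symm
            ((rr i).left l ⊗ₜ[k] Coalgebra.comul ((rr i).right l))) := hW
    _ = ∑ i ∈ r.index, ∑ l ∈ (rr i).index, ∑ m ∈ (rrr i l).index,
          r.left i ⊗ₜ[k] (((rr i).left l ⊗ₜ[k] (rrr i l).left m) ⊗ₜ[k] (rrr i l).right m) := by
        refine Finset.sum_congr rfl fun i _ => Finset.sum_congr rfl fun l _ => ?_
        rw [← (rrr i l).eq, tmul_sum, map_sum, tmul_sum]
        exact Finset.sum_congr rfl fun m _ => by rw [TensorProduct.assoc_symm_tmul]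
    _ = ∑ i ∈ r.index, ∑ l ∈ (rr i).index, ∑ m ∈ (rrl i l).index,
          r.left i ⊗ₜ[k] (((rrl i l).left m ⊗ₜ[k] (rrl i l).right m) ⊗ₜ[k] (rr i).right l) := by
        refine Finset.sum_congr rfl fun i _ => ?_
        have key := congrArg ((TensorProduct.mk k A ((A ⊗[k] A) ⊗[k] A) (r.left i)) ∘ₗ
          (TensorProduct.assoc k A A A).symm.toLinearMap)
          (Coalgebra.sum_tmul_tmul_eq (rr i) (rrl i) (rrr i))
        simp only [map_sum, LinearMap.comp_apply, LinearEquiv.coe_coe,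
          TensorProduct.assoc_symm_tmul, TensorProduct.mk_apply] at key
        exact key.symm

lemma conv_comul_comulAntipode :
    conv k (Coalgebra.comul (R := k) (A := A))
      (Coalgebra.comul (R := k) (A := A) ∘ₗ antipode (R := k)) = convOne k := by
  ext a
  rw [conv_apply_repr k _ _ (ℛ k a)]
  simp only [LinearMap.comp_apply, ← Bialgebra.comul_mul]
  rw [← map_sum, HopfAlgebra.sum_mul_antipode_eq_algebraMap_counit (ℛ k a), Bialgebra.comul_algebraMap]
  rfl

lemma conv_antiComul_comul :
    conv k (TensorProduct.map (antipode (R := k)) (antipode (R := k)) ∘ₗ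
        (TensorProduct.comm k A A).toLinearMap ∘ₗ Coalgebra.comul)
      (Coalgebra.comul (R := k) (A := A)) = convOne k := by
  ext a
  have ff := congrArg (theta k A) (fourfold k A (ℛ k a)
    (fun i => ℛ k ((ℛ k a).left i)) (fun i => ℛ k ((ℛ k a).right i))
    (fun i l => ℛ k ((ℛ k ((ℛ k a).right i)).left l))
    (fun i l => ℛ k ((ℛ k ((ℛ k a).right i)).right l)))
  simp only [map_sum, theta_tmul] at ff
  rw [conv_apply_repr k _ _ (ℛ k a)]
  calc ∑ i ∈ (ℛ k a).index,
        ((TensorProduct.map (antipode (R := k)) (antipode (R := k)) ∘ₗ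
          (TensorProduct.comm k A A).toLinearMap ∘ₗ Coalgebra.comul) ((ℛ k a).left i)) *
          (Coalgebra.comul (R := k) ((ℛ k a).right i))
      = ∑ i ∈ (ℛ k a).index, ∑ j ∈ (ℛ k ((ℛ k a).left i)).index,
          ∑ l ∈ (ℛ k ((ℛ k a).right i)).index,
          (antipode (R := k) ((ℛ k ((ℛ k a).left i)).right j) *
              (ℛ k ((ℛ k a).right i)).left l) ⊗ₜ[k]
            (antipode (R := k) ((ℛ k ((ℛ k a).left i)).left j) *
              (ℛ k ((ℛ k a).right i)).right l) := by
        refine Finset.sum_congr rfl fun i _ => ?_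
        rw [LinearMap.comp_apply, LinearMap.comp_apply, LinearEquiv.coe_coe,
          ← (ℛ k ((ℛ k a).left i)).eq, ← (ℛ k ((ℛ k a).right i)).eq]
        rw [map_sum, map_sum, Finset.sum_mul_sum]
        refine Finset.sum_congr rfl fun j _ => Finset.sum_congr rfl fun l _ => ?_
        rw [TensorProduct.comm_tmul, TensorProduct.map_tmul,
          Algebra.TensorProduct.tmul_mul_tmul]
    _ = ∑ i ∈ (ℛ k a).index, ∑ l ∈ (ℛ k ((ℛ k a).right i)).index,
          ∑ m ∈ (ℛ k ((ℛ k ((ℛ k a).right i)).left l)).index,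
          (antipode (R := k) ((ℛ k ((ℛ k ((ℛ k a).right i)).left l)).left m) *
              (ℛ k ((ℛ k ((ℛ k a).right i)).left l)).right m) ⊗ₜ[k]
            (antipode (R := k) ((ℛ k a).left i) * (ℛ k ((ℛ k a).right i)).right l) := ff
    _ = ∑ i ∈ (ℛ k a).index, ∑ l ∈ (ℛ k ((ℛ k a).right i)).index,
          (1 : A) ⊗ₜ[k] (Coalgebra.counit (R := k) ((ℛ k ((ℛ k a).right i)).left l) •
            (antipode (R := k) ((ℛ k a).left i) * (ℛ k ((ℛ k a).right i)).right l)) := by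
        refine Finset.sum_congr rfl fun i _ => Finset.sum_congr rfl fun l _ => ?_
        rw [← TensorProduct.sum_tmul, HopfAlgebra.sum_antipode_mul_eq_algebraMap_counit
          (ℛ k ((ℛ k ((ℛ k a).right i)).left l)), Algebra.algebraMap_eq_smul_one,
          TensorProduct.smul_tmul]
    _ = ∑ i ∈ (ℛ k a).index,
          (1 : A) ⊗ₜ[k] (antipode (R := k) ((ℛ k a).left i) * (ℛ k a).right i) := by
        refine Finset.sum_congr rfl fun i _ => ?_
        rw [← tmul_sum]
        congr 1
        rw [Finset.sum_congr rfl fun l _ => (mul_smul_comm _ _ _).symm, ← Finset.mul_sum,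
          sum_counit_smul k (ℛ k ((ℛ k a).right i))]
    _ = convOne k a := by
        rw [← tmul_sum, HopfAlgebra.sum_antipode_mul_eq_algebraMap_counit (ℛ k a)]
        show _ = algebraMap k (A ⊗[k] A) _
        rw [Algebra.TensorProduct.algebraMap_apply, Algebra.algebraMap_eq_smul_one]
        rw [TensorProduct.tmul_smul, TensorProduct.smul_tmul']

/-- The antipode is anticomultiplicative. -/
lemma comul_antipode :
    (Coalgebra.comul (R := k) (A := A)) ∘ₗ antipode (R := k) =
      TensorProduct.map (antipode (R := k)) (antipode (R := k)) ∘ₗ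
        (TensorProduct.comm k A A).toLinearMap ∘ₗ Coalgebra.comul :=
  (conv_inv_unique k (conv_comul_comulAntipode k A) (conv_antiComul_comul k A)).symm

lemma comul_antipode_repr {a : A} (r : Coalgebra.Repr k a (A × A)) :
    Coalgebra.comul (R := k) (antipode (R := k) a) =
      ∑ i ∈ r.index, antipode (R := k) (r.right i) ⊗ₜ[k] antipode (R := k) (r.left i) := by
  have := congrFun (congrArg DFunLike.coe (comul_antipode k A)) a
  simp only [LinearMap.comp_apply, LinearEquiv.coe_coe] at this
  rw [this, ← r.eq, map_sum, map_sum]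
  simp [TensorProduct.comm_tmul]

end Hopf
end HopfAux

section

variable (k A M : Type*) [Field k] [Ring A] [HopfAlgebra k A]
  [AddCommGroup M] [Module k M] [Module A M] [IsScalarTower k A M]

/-- The `A`-action on `M` as a `k`-bilinear map. -/
noncomputable def actionBilin : A →ₗ[k] M →ₗ[k] M where
  toFun a :=
    { toFun := fun m => a • m
      map_add' := fun m m' => smul_add a m m'
      map_smul' := fun c m => by
        simp only [RingHom.id_apply]
        rw [← algebraMap_smul A c m, ← mul_smul, ← Algebra.commutes, mul_smul,
          algebraMap_smul] }
  map_add' a b := LinearMap.ext fun m => add_smul a b m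
  map_smul' c a := LinearMap.ext fun m => smul_assoc c a m

/-- The action map `A ⊗[k] M →ₗ[k] M`. -/
noncomputable def actionHom : A ⊗[k] M →ₗ[k] M :=
  TensorProduct.lift (actionBilin k A M)

/-- The action of `A ⊗[k] A` on `A ⊗[k] M`, determined by
`(x ⊗ y) · (b ⊗ m) = (x * b) ⊗ (y • m)`. -/
noncomputable def bigAction : (A ⊗[k] A) ⊗[k] (A ⊗[k] M) →ₗ[k] A ⊗[k] M :=
  (TensorProduct.map (LinearMap.mul' k A) (actionHom k A M)).comp
    (TensorProduct.tensorTensorTensorComm k A A A M).toLinearMap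

namespace HopfAux
open Coalgebra HopfAlgebra

@[simp] lemma actionHom_tmul (a : A) (m : M) : actionHom k A M (a ⊗ₜ[k] m) = a • m := rfl

@[simp] lemma bigAction_tmul (x y b : A) (n : M) :
    bigAction k A M ((x ⊗ₜ[k] y) ⊗ₜ[k] (b ⊗ₜ[k] n)) = (x * b) ⊗ₜ[k] (y • n) := by
  simp [bigAction]

lemma smul_comm_kA (c : k) (a : A) (n : M) : a • (c • n) = c • (a • n) :=
  map_smul (actionBilin k A M a) c n

/-- `x ⊗ ((u ⊗ v) ⊗ n) ↦ (S u * v) ⊗ (S x • n)`. -/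
noncomputable def thetaM : A ⊗[k] ((A ⊗[k] A) ⊗[k] M) →ₗ[k] A ⊗[k] M :=
  (TensorProduct.map (LinearMap.mul' k A ∘ₗ (antipode (R := k)).rTensor A)
      (actionHom k A M ∘ₗ (antipode (R := k)).rTensor M)) ∘ₗ
    (TensorProduct.leftComm k A (A ⊗[k] A) M).toLinearMap

@[simp] lemma thetaM_tmul (x u v : A) (n : M) :
    thetaM k A M (x ⊗ₜ[k] ((u ⊗ₜ[k] v) ⊗ₜ[k] n)) =
      (antipode (R := k) u * v) ⊗ₜ[k] (antipode (R := k) x • n) := by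
  simp [thetaM]

variable {k A M}
variable (ρ : M →ₗ[k] A ⊗[k] M)

/-- The averaging/projection operator `m ↦ ∑ S(m₍₋₁₎) • m₍₀₎`. -/
noncomputable def EOp : M →ₗ[k] M :=
  actionHom k A M ∘ₗ (antipode (R := k)).rTensor M ∘ₗ ρ

lemma EOp_apply {ι : Type*} (m : M) (s : Finset ι) (f : ι → A) (g : ι → M)
    (hs : ρ m = ∑ i ∈ s, f i ⊗ₜ[k] g i) :
    EOp ρ m = ∑ i ∈ s, antipode (R := k) (f i) • g i := by
  simp [EOp, hs, map_sum]

section hyps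
variable (hcoassoc : ∀ m : M,
      (TensorProduct.assoc k A A M)
          ((TensorProduct.map Coalgebra.comul LinearMap.id) (ρ m)) =
        (TensorProduct.map LinearMap.id ρ) (ρ m))
    (hcounit : ∀ m : M,
      (TensorProduct.lid k M)
          ((TensorProduct.map Coalgebra.counit LinearMap.id) (ρ m)) = m)
    (hcompat : ∀ (a : A) (m : M),
      ρ (a • m) = bigAction k A M (Coalgebra.comul a ⊗ₜ[k] ρ m))

include hcounit in
lemma sum_counit_smul_M (m : M) {s : Finset (A × M)}
    (hs : ρ m = ∑ p ∈ s, p.1 ⊗ₜ[k] p.2) :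
    ∑ p ∈ s, Coalgebra.counit (R := k) p.1 • p.2 = m := by
  have := hcounit m
  rw [hs] at this
  simpa [map_sum] using this

include hcoassoc in
lemma coassocM (m : M) {s : Finset (A × M)} (hs : ρ m = ∑ p ∈ s, p.1 ⊗ₜ[k] p.2)
    (ra : ∀ p : A × M, Coalgebra.Repr k p.1 (A × A))
    (t : (A × M) → Finset (A × M)) (ht : ∀ p : A × M, ρ p.2 = ∑ q ∈ t p, q.1 ⊗ₜ[k] q.2) :
    ∑ p ∈ s, ∑ j ∈ (ra p).index, (ra p).left j ⊗ₜ[k] ((ra p).right j ⊗ₜ[k] p.2)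
      = ∑ p ∈ s, ∑ q ∈ t p, p.1 ⊗ₜ[k] (q.1 ⊗ₜ[k] q.2) := by
  have h := hcoassoc m
  rw [hs] at h
  simp only [map_sum, TensorProduct.map_tmul, LinearMap.id_coe, id_eq,
    TensorProduct.assoc_tmul] at h
  calc ∑ p ∈ s, ∑ j ∈ (ra p).index, (ra p).left j ⊗ₜ[k] ((ra p).right j ⊗ₜ[k] p.2)
      = ∑ p ∈ s, (TensorProduct.assoc k A A M) (Coalgebra.comul p.1 ⊗ₜ[k] p.2) := by
        refine Finset.sum_congr rfl fun p _ => ?_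
        rw [← (ra p).eq, sum_tmul, map_sum]
        exact Finset.sum_congr rfl fun j _ => by rw [TensorProduct.assoc_tmul]
    _ = ∑ p ∈ s, p.1 ⊗ₜ[k] ρ p.2 := h
    _ = ∑ p ∈ s, ∑ q ∈ t p, p.1 ⊗ₜ[k] (q.1 ⊗ₜ[k] q.2) := by
        refine Finset.sum_congr rfl fun p _ => ?_
        rw [ht p, tmul_sum]

include hcoassoc in
lemma fourfoldM (m : M) {s : Finset (A × M)} (hs : ρ m = ∑ p ∈ s, p.1 ⊗ₜ[k] p.2)
    (ra : ∀ p : A × M, Coalgebra.Repr k p.1 (A × A))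
    (t : (A × M) → Finset (A × M)) (ht : ∀ p : A × M, ρ p.2 = ∑ q ∈ t p, q.1 ⊗ₜ[k] q.2) :
    ∑ p ∈ s, ∑ j ∈ (ra p).index, ∑ q ∈ t p,
        (ra p).left j ⊗ₜ[k] (((ra p).right j ⊗ₜ[k] q.1) ⊗ₜ[k] q.2)
      = ∑ p ∈ s, ∑ q ∈ t p, ∑ j ∈ (ra q).index,
        p.1 ⊗ₜ[k] (((ra q).left j ⊗ₜ[k] (ra q).right j) ⊗ₜ[k] q.2) := by
  have E1 := coassocM ρ hcoassoc m hs ra t ht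
  have hW := congrArg (LinearMap.lTensor A
    ((TensorProduct.assoc k A A M).symm.toLinearMap ∘ₗ ρ.lTensor A)) E1
  simp only [map_sum, LinearMap.lTensor_tmul, LinearMap.comp_apply] at hW
  calc ∑ p ∈ s, ∑ j ∈ (ra p).index, ∑ q ∈ t p,
        (ra p).left j ⊗ₜ[k] (((ra p).right j ⊗ₜ[k] q.1) ⊗ₜ[k] q.2)
      = ∑ p ∈ s, ∑ j ∈ (ra p).index,
          (ra p).left j ⊗ₜ[k] ((TensorProduct.assoc k A A M).symm
            ((ra p).right j ⊗ₜ[k] ρ p.2)) := by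
        refine Finset.sum_congr rfl fun p _ => Finset.sum_congr rfl fun j _ => ?_
        rw [ht p, tmul_sum, map_sum, tmul_sum]
        exact Finset.sum_congr rfl fun q _ => by rw [TensorProduct.assoc_symm_tmul]
    _ = ∑ p ∈ s, ∑ q ∈ t p,
          p.1 ⊗ₜ[k] ((TensorProduct.assoc k A A M).symm (q.1 ⊗ₜ[k] ρ q.2)) := hW
    _ = ∑ p ∈ s, ∑ q ∈ t p, ∑ j ∈ (ra q).index,
          p.1 ⊗ₜ[k] (((ra q).left j ⊗ₜ[k] (ra q).right j) ⊗ₜ[k] q.2) := by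
        refine Finset.sum_congr rfl fun p _ => ?_
        have h2 := hcoassoc p.2
        rw [ht p] at h2
        simp only [map_sum, TensorProduct.map_tmul, LinearMap.id_coe, id_eq] at h2
        have key := congrArg ((TensorProduct.mk k A ((A ⊗[k] A) ⊗[k] M) p.1) ∘ₗ
          (TensorProduct.assoc k A A M).symm.toLinearMap) h2
        simp only [map_sum, LinearMap.comp_apply, LinearEquiv.coe_coe,
          TensorProduct.mk_apply] at key
        calc ∑ q ∈ t p, p.1 ⊗ₜ[k] ((TensorProduct.assoc k A A M).symm (q.1 ⊗ₜ[k] ρ q.2))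
            = ∑ q ∈ t p, p.1 ⊗ₜ[k]
                ((TensorProduct.assoc k A A M).symm
                  ((TensorProduct.assoc k A A M) (Coalgebra.comul q.1 ⊗ₜ[k] q.2))) := by
              rw [← key]
          _ = ∑ q ∈ t p, ∑ j ∈ (ra q).index,
                p.1 ⊗ₜ[k] (((ra q).left j ⊗ₜ[k] (ra q).right j) ⊗ₜ[k] q.2) := by
              refine Finset.sum_congr rfl fun q _ => ?_
              rw [LinearEquiv.symm_apply_apply, ← (ra q).eq, sum_tmul, tmul_sum]

include hcoassoc hcounit hcompat in
lemma stepA (m : M) : ρ (EOp ρ m) = (1 : A) ⊗ₜ[k] EOp ρ m := by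
  obtain ⟨s, hs⟩ := TensorProduct.exists_finset (ρ m)
  choose t ht using fun p : A × M => TensorProduct.exists_finset (ρ p.2)
  have ff := congrArg (thetaM k A M)
    (fourfoldM ρ hcoassoc m hs (fun p => ℛ k p.1) t ht)
  simp only [map_sum, thetaM_tmul] at ff
  calc ρ (EOp ρ m)
      = ∑ p ∈ s, bigAction k A M (Coalgebra.comul (antipode (R := k) p.1) ⊗ₜ[k] ρ p.2) := by
        rw [EOp_apply ρ m s (fun p => p.1) (fun p => p.2) hs, map_sum]
        exact Finset.sum_congr rfl fun p _ => hcompat _ _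
    _ = ∑ p ∈ s, ∑ j ∈ (ℛ k p.1).index, ∑ q ∈ t p,
          (antipode (R := k) ((ℛ k p.1).right j) * q.1) ⊗ₜ[k]
            (antipode (R := k) ((ℛ k p.1).left j) • q.2) := by
        refine Finset.sum_congr rfl fun p _ => ?_
        rw [HopfAux.comul_antipode_repr k A (ℛ k p.1), ht p, sum_tmul, map_sum]
        refine Finset.sum_congr rfl fun j _ => ?_
        rw [tmul_sum, map_sum]
        exact Finset.sum_congr rfl fun q _ => by rw [bigAction_tmul]
    _ = ∑ p ∈ s, ∑ q ∈ t p, ∑ j ∈ (ℛ k q.1).index,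
          (antipode (R := k) ((ℛ k q.1).left j) * (ℛ k q.1).right j) ⊗ₜ[k]
            (antipode (R := k) p.1 • q.2) := ff
    _ = ∑ p ∈ s, ∑ q ∈ t p,
          (1 : A) ⊗ₜ[k] (Coalgebra.counit (R := k) q.1 •
            (antipode (R := k) p.1 • q.2)) := by
        refine Finset.sum_congr rfl fun p _ => Finset.sum_congr rfl fun q _ => ?_
        rw [← TensorProduct.sum_tmul, HopfAlgebra.sum_antipode_mul_eq_algebraMap_counit (ℛ k q.1),
          Algebra.algebraMap_eq_smul_one, TensorProduct.smul_tmul]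
    _ = ∑ p ∈ s, (1 : A) ⊗ₜ[k] (antipode (R := k) p.1 • p.2) := by
        refine Finset.sum_congr rfl fun p _ => ?_
        rw [← tmul_sum]
        congr 1
        rw [Finset.sum_congr rfl fun q _ => (smul_comm_kA k A M _ _ _).symm,
          ← Finset.smul_sum, sum_counit_smul_M ρ hcounit p.2 (ht p)]
    _ = (1 : A) ⊗ₜ[k] EOp ρ m := by
        rw [EOp_apply ρ m s (fun p => p.1) (fun p => p.2) hs, tmul_sum]

include hcoassoc hcounit in
lemma stepB (m : M) : actionHom k A M ((LinearMap.lTensor A (EOp ρ)) (ρ m)) = m := by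
  obtain ⟨s, hs⟩ := TensorProduct.exists_finset (ρ m)
  choose t ht using fun p : A × M => TensorProduct.exists_finset (ρ p.2)
  have E1 := coassocM ρ hcoassoc m hs (fun p => ℛ k p.1) t ht
  apply_fun (actionHom k A M ∘ₗ
    (LinearMap.mul' k A ∘ₗ (antipode (R := k)).lTensor A).rTensor M ∘ₗ
    (TensorProduct.assoc k A A M).symm.toLinearMap) at E1
  simp only [map_sum, LinearMap.comp_apply, LinearEquiv.coe_coe,
    TensorProduct.assoc_symm_tmul, LinearMap.rTensor_tmul, LinearMap.lTensor_tmul,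
    LinearMap.mul'_apply, actionHom_tmul] at E1
  calc actionHom k A M ((LinearMap.lTensor A (EOp ρ)) (ρ m))
      = ∑ p ∈ s, p.1 • EOp ρ p.2 := by
        rw [hs, map_sum, map_sum]
        exact Finset.sum_congr rfl fun p _ => by
          rw [LinearMap.lTensor_tmul, actionHom_tmul]
    _ = ∑ p ∈ s, ∑ q ∈ t p, (p.1 * antipode (R := k) q.1) • q.2 := by
        refine Finset.sum_congr rfl fun p _ => ?_
        rw [EOp_apply ρ p.2 (t p) (fun q => q.1) (fun q => q.2) (ht p), Finset.smul_sum]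
        exact Finset.sum_congr rfl fun q _ => (mul_smul _ _ _).symm
    _ = ∑ p ∈ s, ∑ j ∈ (ℛ k p.1).index,
          ((ℛ k p.1).left j * antipode (R := k) ((ℛ k p.1).right j)) • p.2 := E1.symm
    _ = m := by
        refine Eq.trans (Finset.sum_congr rfl fun p _ => ?_)
          (sum_counit_smul_M ρ hcounit m hs)
        rw [← Finset.sum_smul, HopfAlgebra.sum_mul_antipode_eq_algebraMap_counit (ℛ k p.1), algebraMap_smul]

include hcompat in
lemma rho_smul_coinv (a : A) (n : M) (hn : ρ n = (1 : A) ⊗ₜ[k] n)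
    (r : Coalgebra.Repr k a (A × A)) :
    ρ (a • n) = ∑ j ∈ r.index, r.left j ⊗ₜ[k] (r.right j • n) := by
  rw [hcompat a n, hn, ← r.eq, sum_tmul, map_sum]
  exact Finset.sum_congr rfl fun j _ => by rw [bigAction_tmul, mul_one]

include hcompat in
lemma EOp_smul_coinv (a : A) (n : M) (hn : ρ n = (1 : A) ⊗ₜ[k] n) :
    EOp ρ (a • n) = Coalgebra.counit (R := k) a • n := by
  rw [EOp_apply ρ (a • n) (ℛ k a).index (ℛ k a).left (fun j => (ℛ k a).right j • n)
    (rho_smul_coinv ρ hcompat a n hn (ℛ k a))]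
  rw [Finset.sum_congr rfl fun j _ => (mul_smul _ _ _).symm, ← Finset.sum_smul,
    HopfAlgebra.sum_antipode_mul_eq_algebraMap_counit (ℛ k a), algebraMap_smul]

end hyps
end HopfAux

/-- A left Hopf module over a Hopf algebra `A` over a field `k` is free as a left
`A`-module. -/
theorem hopfModule_free (ρ : M →ₗ[k] A ⊗[k] M)
    (hcoassoc : ∀ m : M,
      (TensorProduct.assoc k A A M)
          ((TensorProduct.map Coalgebra.comul LinearMap.id) (ρ m)) =
        (TensorProduct.map LinearMap.id ρ) (ρ m))
    (hcounit : ∀ m : M,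
      (TensorProduct.lid k M)
          ((TensorProduct.map Coalgebra.counit LinearMap.id) (ρ m)) = m)
    (hcompat : ∀ (a : A) (m : M),
      ρ (a • m) = bigAction k A M (Coalgebra.comul a ⊗ₜ[k] ρ m)) :
    Module.Free A M := by
  classical
  -- the coinvariant submodule
  let N : Submodule k M :=
    { carrier := {m | ρ m = (1 : A) ⊗ₜ[k] m}
      add_mem' := fun {x y} hx hy => by
        simp only [Set.mem_setOf_eq] at *
        rw [map_add, hx, hy, TensorProduct.tmul_add]
      zero_mem' := by simp
      smul_mem' := fun c {x} hx => by
        simp only [Set.mem_setOf_eq] at *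
        rw [map_smul, hx, TensorProduct.tmul_smul] }
  have hN : ∀ n : N, ρ (n : M) = (1 : A) ⊗ₜ[k] (n : M) := fun n => n.2
  have hE : ∀ m : M, HopfAux.EOp ρ m ∈ N := fun m => HopfAux.stepA ρ hcoassoc hcounit hcompat m
  let E' : M →ₗ[k] N := (HopfAux.EOp ρ).codRestrict N hE
  haveI : SMulCommClass k A M := ⟨fun c a n => (HopfAux.smul_comm_kA k A M c a n).symm⟩
  let f : A →ₗ[A] (N →ₗ[k] M) :=
    { toFun := fun a => (actionBilin k A M a) ∘ₗ N.subtype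
      map_add' := fun a b => by
        ext n
        exact add_smul a b (n : M)
      map_smul' := fun a b => by
        ext n
        exact mul_smul a b (n : M) }
  let α : A ⊗[k] N →ₗ[A] M := TensorProduct.AlgebraTensorModule.lift f
  have hα : ∀ (a : A) (n : N), α (a ⊗ₜ[k] n) = a • (n : M) := fun a n => rfl
  let β : M →ₗ[k] A ⊗[k] N := (LinearMap.lTensor A E') ∘ₗ ρ
  have hαβ : ∀ m : M, α (β m) = m := by
    intro m
    have : (α.restrictScalars k) ∘ₗ (LinearMap.lTensor A E') =
        actionHom k A M ∘ₗ (LinearMap.lTensor A (HopfAux.EOp ρ)) := by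
      apply TensorProduct.ext'
      intro a n
      simp only [LinearMap.comp_apply, LinearMap.coe_restrictScalars,
        LinearMap.lTensor_tmul, HopfAux.actionHom_tmul]
      rw [hα]
      rfl
    calc α (β m) = ((α.restrictScalars k) ∘ₗ (LinearMap.lTensor A E')) (ρ m) := rfl
      _ = actionHom k A M ((LinearMap.lTensor A (HopfAux.EOp ρ)) (ρ m)) := by rw [this]; rfl
      _ = m := HopfAux.stepB ρ hcoassoc hcounit m
  have hβα : ∀ x : A ⊗[k] N, β (α x) = x := by
    intro x
    induction x using TensorProduct.induction_on with
    | zero => simp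
    | add x y hx hy => rw [map_add, map_add, hx, hy]
    | tmul a n =>
      rw [hα]
      show (LinearMap.lTensor A E') (ρ (a • (n : M))) = a ⊗ₜ[k] n
      rw [HopfAux.rho_smul_coinv ρ hcompat a (n : M) (hN n) (Coalgebra.Repr.arbitrary k a), map_sum]
      have hE' : ∀ j, E' ((Coalgebra.Repr.arbitrary k a).right j • (n : M)) =
          Coalgebra.counit (R := k) ((Coalgebra.Repr.arbitrary k a).right j) • n := by
        intro j
        apply Subtype.ext
        show HopfAux.EOp ρ ((Coalgebra.Repr.arbitrary k a).right j • (n : M)) = _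
        rw [HopfAux.EOp_smul_coinv ρ hcompat _ _ (hN n)]
        rfl
      calc ∑ j ∈ (Coalgebra.Repr.arbitrary k a).index,
            (LinearMap.lTensor A E') ((Coalgebra.Repr.arbitrary k a).left j ⊗ₜ[k] ((Coalgebra.Repr.arbitrary k a).right j • (n : M)))
          = ∑ j ∈ (Coalgebra.Repr.arbitrary k a).index,
              (Coalgebra.counit (R := k) ((Coalgebra.Repr.arbitrary k a).right j) • (Coalgebra.Repr.arbitrary k a).left j) ⊗ₜ[k] n := by
            refine Finset.sum_congr rfl fun j _ => ?_
            rw [LinearMap.lTensor_tmul, hE', TensorProduct.tmul_smul,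
              TensorProduct.smul_tmul']
        _ = a ⊗ₜ[k] n := by
            rw [← TensorProduct.sum_tmul, HopfAux.sum_smul_counit k (Coalgebra.Repr.arbitrary k a)]
  have hbij : Function.Bijective α := by
    constructor
    · intro x y hxy
      have := congrArg β hxy
      rwa [hβα, hβα] at this
    · intro m
      exact ⟨β m, hαβ m⟩
  haveI : Module.Free A (A ⊗[k] N) :=
    Module.Free.of_basis (Algebra.TensorProduct.basis A (Module.Free.chooseBasis k N))
  exact Module.Free.of_equiv (LinearEquiv.ofBijective α hbij)

end
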